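/- Let M ≥ 2 and let A be the inverse of the M×M Vandermonde matrix V with V_{j,n} = j^(n-1). Then the second row of A satisfies A_{2,n} = (-1)^n * C(M,n) * ( Σ_{q=1}^{n-1} 1/q + Σ_{q=n+1}^{M} 1/q ) for n = 1,…,M. -/

import Mathlib

open Finset Polynomial Nat

lemma sum_powersetCard_pred {ι : Type*} [DecidableEq ι] (s : Finset ι) (hs : s.Nonempty)
    (f : ι → ℚ) :
    ∑ t ∈ s.powersetCard (s.card - 1), ∏ i ∈ t, f i = ∑ i ∈ s, ∏ j ∈ s.erase i, f j := by
  refine (Finset.sum_bij (fun i _ => s.erase i) ?_ ?_ ?_ ?_).symm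
  · intro a ha; rw [mem_powersetCard]
    exact ⟨erase_subset _ _, card_erase_of_mem ha⟩
  · intro a ha b hb h
    by_contra hne
    have : a ∈ s.erase b := mem_erase.mpr ⟨hne, ha⟩
    rw [← h] at this
    exact (notMem_erase a s) this
  · intro t htmem
    rw [mem_powersetCard] at htmem
    obtain ⟨hsub, hcard⟩ := htmem
    have h1 : (s \ t).card = 1 := by
      rw [card_sdiff_of_subset hsub, hcard]
      have := card_pos.mpr hs
      omega
    obtain ⟨i, hi⟩ := card_eq_one.mp h1
    have his : i ∈ s := by
      have : i ∈ s \ t := hi ▸ mem_singleton_self i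
      exact (mem_sdiff.mp this).1
    refine ⟨i, his, ?_⟩
    show s.erase i = t
    rw [erase_eq, ← hi, sdiff_sdiff_right_self]
    exact inf_eq_right.mpr hsub
  · intro a _; rfl


lemma prod_Icc_id_fact (m : ℕ) : (∏ q ∈ Finset.Icc 1 m, q) = m ! := by
  rw [← Finset.Ico_add_one_right_eq_Icc, Finset.prod_Ico_id_eq_factorial]

lemma prod_Icc_reflect (m : ℕ) : (∏ q ∈ Finset.Icc 1 m, (m + 1 - q)) = m ! := by
  rw [← prod_Icc_id_fact m]
  refine Finset.prod_nbij' (fun q => m + 1 - q) (fun q => m + 1 - q) ?_ ?_ ?_ ?_ ?_ <;>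
    simp only [Finset.mem_Icc] <;> intros <;> first | omega | trivial

lemma prod_Icc_shift (a m : ℕ) : (∏ q ∈ Finset.Icc (a+1) (a+m), (q - a)) = m ! := by
  rw [← prod_Icc_id_fact m]
  refine Finset.prod_nbij' (fun q => q - a) (fun q => q + a) ?_ ?_ ?_ ?_ ?_ <;>
    simp only [Finset.mem_Icc] <;> intros <;> first | omega | trivial

/-- The second row of the inverse of the Vandermonde matrix `V_{j,n} = j^(n-1)`,
`j, n ∈ {1,…,M}` (indexed here by `Fin M`): with `n = k+1`,
`A_{2,n} = (-1)^n * C(M,n) * (Σ_{q=1}^{n-1} 1/q + Σ_{q=n+1}^{M} 1/q)`. -/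
theorem inverse_vandermonde_second_row (M : ℕ) (hM : 2 ≤ M) (k : Fin M) :
    (Matrix.of fun j n : Fin M => ((j : ℚ) + 1) ^ (n : ℕ))⁻¹
        ⟨1, by omega⟩ k =
      (-1 : ℚ) ^ ((k : ℕ) + 1) * (M.choose ((k : ℕ) + 1)) *
        ((∑ q ∈ Finset.Icc 1 (k : ℕ), (1 : ℚ) / q) +
         (∑ q ∈ Finset.Icc ((k : ℕ) + 2) M, (1 : ℚ) / q)) := by
  set v : Fin M → ℚ := fun i => (i:ℚ)+1 with hv
  have hinj : Set.InjOn v (univ : Finset (Fin M)) := by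
    intro a _ b _ h
    have : (a:ℕ) = b := by exact_mod_cast (by simpa [v] using h : ((a:ℕ):ℚ) = b)
    exact Fin.ext this
  set W : Matrix (Fin M) (Fin M) ℚ :=
    Matrix.of (fun n l : Fin M => (Lagrange.basis univ v l).coeff n) with hW
  have hVW : (Matrix.of fun j n : Fin M => ((j : ℚ) + 1) ^ (n : ℕ)) * W = 1 := by
    ext j l
    rw [Matrix.mul_apply]
    have hdeg : (Lagrange.basis univ v l).natDegree < M := by
      rw [Lagrange.natDegree_basis hinj (mem_univ l)]
      simp only [Finset.card_univ, Fintype.card_fin]; omega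
    have heval : ∑ n : Fin M, (Matrix.of fun j n : Fin M => ((j : ℚ) + 1) ^ (n : ℕ)) j n * W n l
        = (Lagrange.basis univ v l).eval (v j) := by
      rw [Polynomial.eval_eq_sum_range' hdeg,
        ← Fin.sum_univ_eq_sum_range (fun n => (Lagrange.basis univ v l).coeff n * (v j)^n) M]
      exact Finset.sum_congr rfl fun n _ => by simp [W, v, mul_comm]
    rw [heval]
    rcases eq_or_ne j l with rfl | hne
    · rw [Lagrange.eval_basis_self hinj (mem_univ j), Matrix.one_apply_eq]
    · rw [Lagrange.eval_basis_of_ne (Ne.symm hne) (mem_univ j), Matrix.one_apply_ne hne]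
  rw [Matrix.inv_eq_right_inv hVW]
  show (Lagrange.basis univ v k).coeff 1 = _
  set t : Finset (Fin M) := univ.erase k with ht
  have htcard : t.card = M - 1 := by
    rw [ht, card_erase_of_mem (mem_univ k), Finset.card_univ, Fintype.card_fin]
  have hmem : ∀ j ∈ t, v j ≠ 0 := by
    intro j _; rw [hv]; positivity
  have hbasis : Lagrange.basis univ v k
      = C (∏ j ∈ t, (v k - v j)⁻¹) * ∏ j ∈ t, (X - C (v j)) := by
    rw [Lagrange.basis]
    simp only [Lagrange.basisDivisor]
    rw [prod_mul_distrib, map_prod]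
  have hprodcoeff : (∏ j ∈ t, (X - C (v j))).coeff 1
      = (-1:ℚ)^(M-2) * ((∏ j ∈ t, v j) * ∑ j ∈ t, (v j)⁻¹) := by
    have h1 : (∏ j ∈ t, (X - C (v j))) = ((t.val.map v).map (fun a => X - C a)).prod := by
      rw [Multiset.map_map]; rfl
    have hcard : Multiset.card (t.val.map v) = M - 1 := by
      rw [Multiset.card_map]; exact_mod_cast htcard
    rw [h1, Multiset.prod_X_sub_C_coeff _ (by rw [hcard]; omega), hcard]
    have h12 : M - 1 - 1 = M - 2 := by omega
    rw [h12, Finset.esymm_map_val]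
    congr 1
    have h2 : M - 2 = t.card - 1 := by omega
    rw [h2, sum_powersetCard_pred t (by rw [← Finset.card_pos, htcard]; omega) v, mul_sum]
    refine Finset.sum_congr rfl fun i hi => ?_
    rw [← Finset.mul_prod_erase t v hi, mul_comm (v i), mul_assoc,
      mul_inv_cancel₀ (hmem i hi), mul_one]
  rw [hbasis, coeff_C_mul, hprodcoeff]
  have hkM : (k:ℕ) < M := k.isLt
  have hemb : Function.Injective (fun i : Fin M => (i:ℕ)+1) := by
    intro a b h
    have h' : (a:ℕ)+1 = (b:ℕ)+1 := h
    exact Fin.ext (by omega)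
  set e : Fin M ↪ ℕ := ⟨fun i => (i:ℕ)+1, hemb⟩ with he
  have hmap : t.map e = (Icc 1 M).erase ((k:ℕ)+1) := by
    ext q
    simp only [mem_map, mem_erase, mem_Icc, ht, Function.Embedding.coeFn_mk, he]
    constructor
    · rintro ⟨i, hi, rfl⟩
      have hik : i ≠ k := hi.1
      have h2 : (i:ℕ) ≠ (k:ℕ) := fun h => hik (Fin.ext h)
      have := i.isLt
      omega
    · rintro ⟨hne, h1, h2⟩
      refine ⟨⟨q-1, by omega⟩, ⟨?_, mem_univ _⟩, by simp; omega⟩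
      intro h
      apply hne
      have : ((⟨q-1, by omega⟩ : Fin M) : ℕ) = (k:ℕ) := congrArg Fin.val h
      simp at this; omega
  have hQ1 : ∏ j ∈ t, (v k - v j) = ∏ q ∈ (Icc 1 M).erase ((k:ℕ)+1), (((k:ℕ):ℚ) + 1 - q) := by
    rw [← hmap, prod_map]
    refine prod_congr rfl fun i _ => ?_
    simp only [he, Function.Embedding.coeFn_mk, hv]
    push_cast; ring
  have hQ2 : ∏ j ∈ t, v j = ∏ q ∈ (Icc 1 M).erase ((k:ℕ)+1), ((q:ℕ):ℚ) := by
    rw [← hmap, prod_map]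
    refine prod_congr rfl fun i _ => ?_
    simp [he, hv]
  have hQ3 : ∑ j ∈ t, (v j)⁻¹ = ∑ q ∈ (Icc 1 M).erase ((k:ℕ)+1), ((q:ℕ):ℚ)⁻¹ := by
    rw [← hmap, sum_map]
    refine sum_congr rfl fun i _ => ?_
    simp [he, hv]
  have hsplit : (Icc 1 M).erase ((k:ℕ)+1) = Icc 1 (k:ℕ) ∪ Icc ((k:ℕ)+2) M := by
    ext q; simp only [mem_erase, mem_Icc, mem_union]; omega
  have hdisj : Disjoint (Icc 1 (k:ℕ)) (Icc ((k:ℕ)+2) M) := by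
    simp only [Finset.disjoint_left, mem_Icc]; intro q h1 h2; omega
  have hE1 : ∏ q ∈ Icc 1 (k:ℕ), (((k:ℕ):ℚ) + 1 - q) = ((k:ℕ)! : ℚ) := by
    rw [← prod_Icc_reflect (k:ℕ), Nat.cast_prod]
    refine prod_congr rfl fun q hq => ?_
    rw [mem_Icc] at hq
    rw [Nat.cast_sub (by omega : q ≤ (k:ℕ)+1)]
    push_cast; ring
  have hE2 : ∏ q ∈ Icc ((k:ℕ)+2) M, (((k:ℕ):ℚ) + 1 - q)
      = (-1:ℚ)^(M-(k:ℕ)-1) * ((M-(k:ℕ)-1)! : ℚ) := by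
    have hcard : (Icc ((k:ℕ)+2) M).card = M-(k:ℕ)-1 := by rw [Nat.card_Icc]; omega
    have step1 : ∏ q ∈ Icc ((k:ℕ)+2) M, (((k:ℕ):ℚ) + 1 - q)
        = ∏ q ∈ Icc ((k:ℕ)+2) M, ((-1:ℚ) * ((q:ℚ) - (((k:ℕ):ℚ) + 1))) :=
      prod_congr rfl fun q _ => by ring
    rw [step1, prod_mul_distrib, prod_const, hcard]
    congr 1
    have hIcc : Icc ((k:ℕ)+2) M = Icc (((k:ℕ)+1)+1) (((k:ℕ)+1)+(M-(k:ℕ)-1)) := by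
      congr 1; omega
    rw [← prod_Icc_shift ((k:ℕ)+1) (M-(k:ℕ)-1), ← hIcc, Nat.cast_prod]
    refine prod_congr rfl fun q hq => ?_
    rw [mem_Icc] at hq
    rw [Nat.cast_sub (by omega : (k:ℕ)+1 ≤ q)]
    push_cast; ring
  have hE3 : (((k:ℕ):ℚ) + 1) * ∏ q ∈ (Icc 1 M).erase ((k:ℕ)+1), ((q:ℕ):ℚ) = (M ! : ℚ) := by
    have hm : (k:ℕ)+1 ∈ Icc 1 M := mem_Icc.mpr ⟨by omega, by omega⟩
    have h := Finset.mul_prod_erase (Icc 1 M) (fun q => ((q:ℕ):ℚ)) hm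
    rw [← prod_Icc_id_fact M, Nat.cast_prod, ← h]
    push_cast; ring
  have key : (M ! : ℚ) = (M.choose ((k:ℕ)+1) : ℚ) * ((((k:ℕ):ℚ)+1) * ((k:ℕ)! : ℚ))
      * ((M-(k:ℕ)-1)! : ℚ) := by
    have h := Nat.choose_mul_factorial_mul_factorial (show (k:ℕ)+1 ≤ M by omega)
    have h2 : M - ((k:ℕ)+1) = M - (k:ℕ) - 1 := by omega
    rw [h2] at h
    rw [← h, Nat.factorial_succ]
    push_cast; ring
  have hP : ∏ q ∈ (Icc 1 M).erase ((k:ℕ)+1), ((q:ℕ):ℚ)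
      = (M.choose ((k:ℕ)+1) : ℚ) * ((k:ℕ)! : ℚ) * ((M-(k:ℕ)-1)! : ℚ) := by
    have hk0 : (((k:ℕ):ℚ)+1) ≠ 0 := by positivity
    field_simp at hE3 ⊢
    rw [key] at hE3
    have := mul_left_cancel₀ hk0 (by linarith [hE3] : (((k:ℕ):ℚ)+1) * (∏ q ∈ (Icc 1 M).erase ((k:ℕ)+1), ((q:ℕ):ℚ)) = (((k:ℕ):ℚ)+1) * ((M.choose ((k:ℕ)+1) : ℚ) * ((k:ℕ)! : ℚ) * ((M-(k:ℕ)-1)! : ℚ)))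
    exact this
  have ha : ((k:ℕ)! : ℚ) ≠ 0 := by exact_mod_cast (Nat.factorial_ne_zero _)
  have hb : ((M-(k:ℕ)-1)! : ℚ) ≠ 0 := by exact_mod_cast (Nat.factorial_ne_zero _)
  have hsign2 : (-1:ℚ)^(M-2) = (-1:ℚ)^(M-(k:ℕ)-1) * (-1:ℚ)^((k:ℕ)+1) := by
    rw [← pow_add]
    rw [neg_one_pow_eq_pow_mod_two, neg_one_pow_eq_pow_mod_two (n := M-(k:ℕ)-1+((k:ℕ)+1))]
    congr 1
    omega
  rw [prod_inv_distrib, hQ1, hQ2, hQ3, hP]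
  rw [hsplit] at hQ1 ⊢
  rw [prod_union hdisj, sum_union hdisj, hE1, hE2]
  have hX : ((k:ℕ)! : ℚ) * ((-1:ℚ)^(M-(k:ℕ)-1) * ((M-(k:ℕ)-1)! : ℚ)) ≠ 0 := by
    apply mul_ne_zero ha
    exact mul_ne_zero (pow_ne_zero _ (by norm_num)) hb
  simp only [one_div]
  rw [inv_mul_eq_iff_eq_mul₀ hX]
  linear_combination ((M.choose ((k:ℕ)+1) : ℚ) * ((k:ℕ)! : ℚ) * ((M-(k:ℕ)-1)! : ℚ)
    * ((∑ q ∈ Icc 1 (k:ℕ), ((q:ℕ):ℚ)⁻¹) + ∑ q ∈ Icc ((k:ℕ)+2) M, ((q:ℕ):ℚ)⁻¹)) * hsign2
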